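/- Let A be a magma with a frame {B_i}_{i ∈ I} of isolated subsets (I ordered by i ≤ j iff B_i ⊆ B_j). Then for all a, b ∈ A and all i ∈ I: if a ∈ ⋃_{j ≥ i} B_j⁻ or b ∈ ⋃_{j ≥ i} B_j⁻, then a * b ∈ ⋃_{j ≥ i} B_j⁻, where B_j⁻ = B_j \ ⋃_{k < j} B_k. -/

import Mathlib

def Isolated {A : Type*} (op : A → A → A) (B : Set A) : Prop :=
  (∀ a b : A, a ∈ B → b ∈ B → op a b ∈ B) ∧
  (∀ a b : A, (a ∉ B ∨ b ∉ B) → op a b ∉ B)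

def Bminus {I α : Type*} [Preorder I] (B : I → Set α) (i : I) : Set α :=
  B i \ ⋃ j, ⋃ (_ : j < i), B j

/-- in a frame of isolated subsets, if one of the arguments lies
in `⋃_{j ≥ i} B_j⁻`, then so does the result of the operation. -/
theorem stmt_14 {I α : Type*} [PartialOrder I] [Finite I]
    (op : α → α → α) (B : I → Set α)
    (hiso : ∀ i, Isolated op (B i))
    (hord : ∀ i j : I, i ≤ j ↔ B i ⊆ B j)
    (hjoin : ∀ i j : I, ∃ k : I, B i ⊆ B k ∧ B j ⊆ B k ∧
      ∀ l : I, B i ⊆ B l → B j ⊆ B l → B k ⊆ B l)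
    (htop : ∃ t : I, B t = Set.univ)
    (hinter : ∀ i j : I, (B i ∩ B j).Nonempty → ∃ k : I, B k = B i ∩ B j) :
    ∀ (i : I) (a b : α),
      (a ∈ ⋃ j, ⋃ (_ : i ≤ j), Bminus B j ∨ b ∈ ⋃ j, ⋃ (_ : i ≤ j), Bminus B j) →
      op a b ∈ ⋃ j, ⋃ (_ : i ≤ j), Bminus B j := by
  classical
  -- minimal index lemma
  have hmin : ∀ a : α, ∃ m : I, a ∈ B m ∧ ∀ k, a ∈ B k → B m ⊆ B k := by
    intro a
    have key : ∀ s : Finset I, s.Nonempty → (∀ k ∈ s, a ∈ B k) →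
        ∃ m, a ∈ B m ∧ ∀ k ∈ s, B m ⊆ B k := by
      intro s
      induction s using Finset.induction with
      | empty => intro h; simp at h
      | insert _ _ hj ih =>
        rename_i j s
        intro _ hmem
        by_cases hs : s.Nonempty
        · obtain ⟨m', hm'a, hm's⟩ := ih hs (fun k hk => hmem k (Finset.mem_insert_of_mem hk))
          have hne : (B j ∩ B m').Nonempty := ⟨a, hmem j (Finset.mem_insert_self j s), hm'a⟩
          obtain ⟨k0, hk0⟩ := hinter j m' hne
          refine ⟨k0, ?_, ?_⟩
          · rw [hk0]; exact ⟨hmem j (Finset.mem_insert_self j s), hm'a⟩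
          · intro k hk
            rcases Finset.mem_insert.mp hk with rfl | hk
            · rw [hk0]; exact Set.inter_subset_left
            · exact (hk0 ▸ Set.inter_subset_right).trans (hm's k hk)
        · have : s = ∅ := Finset.not_nonempty_iff_eq_empty.mp hs
          subst this
          refine ⟨j, hmem j (Finset.mem_insert_self j ∅), ?_⟩
          intro k hk
          have : k = j := by simpa using hk
          subst this; exact subset_rfl
    cases nonempty_fintype I
    obtain ⟨t, ht⟩ := htop
    have hta : a ∈ B t := by rw [ht]; trivial
    obtain ⟨m, ham, hm⟩ :=
      key (Finset.univ.filter (fun k => a ∈ B k)) ⟨t, by simp [hta]⟩ (by simp)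
    exact ⟨m, ham, fun k hk => hm k (by simp [hk])⟩
  -- characterization of membership in the union
  have hchar : ∀ (i : I) (a : α),
      a ∈ (⋃ j, ⋃ (_ : i ≤ j), Bminus B j) ↔ ∀ k, a ∈ B k → B i ⊆ B k := by
    intro i a
    constructor
    · intro ha k hak
      simp only [Set.mem_iUnion, Bminus, Set.mem_diff] at ha
      obtain ⟨j, hij, haj, hno⟩ := ha
      have hno' : ∀ l, l < j → a ∉ B l := by
        intro l hl hal
        exact hno ⟨l, hl, hal⟩
      obtain ⟨m, hm⟩ := hinter j k ⟨a, haj, hak⟩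
      have ham : a ∈ B m := by rw [hm]; exact ⟨haj, hak⟩
      have hmj : m ≤ j := (hord m j).mpr (hm ▸ Set.inter_subset_left)
      have hmj' : m = j := by
        by_contra hne
        exact hno' m (lt_of_le_of_ne hmj hne) ham
      have : B j ⊆ B k := by rw [← hmj', hm]; exact Set.inter_subset_right
      exact ((hord i j).mp hij).trans this
    · intro H
      obtain ⟨m, ham, hm⟩ := hmin a
      have him : i ≤ m := (hord i m).mpr (H m ham)
      refine Set.mem_iUnion.mpr ⟨m, Set.mem_iUnion.mpr ⟨him, ham, ?_⟩⟩
      intro hmem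
      simp only [Set.mem_iUnion] at hmem
      obtain ⟨l, hl, hal⟩ := hmem
      exact absurd ((hord m l).mpr (hm l hal)) (not_le_of_gt hl)
  intro i a b h
  rw [hchar]
  intro k hk
  have hab : a ∈ B k ∧ b ∈ B k := by
    by_contra h'
    exact (hiso k).2 a b (by tauto) hk
  rcases h with h | h
  · exact (hchar i a).mp h k hab.1
  · exact (hchar i b).mp h k hab.2
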